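/- (Corollary 5, first asymptotic.) Let W(t,v) = (h₃(v)t³+h₂(v)t²+h₁(v)t+h₀(v))·((1−v)⁷(1+v)⁴(1+v²)(1−t)³(1+t)(1−vt))^{-1} ∈ ℚ[[t,v]], with h₃(v) = v²(v⁴−v³+3v²−v+1), h₂(v) = v(2v⁴−4v³+v²−v−1), h₁(v) = v(−v⁴−v³+v²−4v+2), h₀(v) = v⁴−v³+3v²−v+1, and for λ1 ≥ λ2 ≥ 0 let m(λ1,λ2) be the coefficient of t^{λ1−λ2}v^{λ2} in W. Then there exists a constant C > 0 such that for all integers λ1 > 2λ2 ≥ 0: |m(λ1,λ2) − ( λ2⁷/(7!·2⁵) + (λ1−λ2)·λ2⁶/(6!·2⁴) + (λ1−λ2)²·λ2⁵/(5!·2⁴) )| ≤ C·(λ1+λ2+1)⁶. -/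

import Mathlib

open Finset

abbrev Q2 : Type := MvPowerSeries (Fin 2) ℚ

noncomputable def Xv (i : Fin 2) : Q2 := MvPowerSeries.X i

noncomputable def mon (i j : ℕ) : Fin 2 →₀ ℕ := Finsupp.single 0 i + Finsupp.single 1 j

noncomputable def c (i j : ℕ) (f : Q2) : ℚ := MvPowerSeries.coeff (mon i j) f

/-- Schur function S_{(l1,l2)}(x,y) for l1 ≥ l2. -/
noncomputable def schur (l1 l2 : ℕ) : Q2 :=
  (Xv 0 * Xv 1) ^ l2 * ∑ i ∈ range (l1 - l2 + 1), Xv 0 ^ i * Xv 1 ^ (l1 - l2 - i)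

/-- f = Σ_{l1 ≥ l2 ≥ 0} m(l1,l2) · S_{(l1,l2)}, expressed coefficientwise
(each coefficient receives only finitely many contributions, since `schur l1 l2`
is homogeneous of degree `l1 + l2`). -/
def IsSchurExpansion (m : ℕ → ℕ → ℚ) (f : Q2) : Prop :=
  ∀ i j : ℕ, c i j f =
    ∑ l1 ∈ range (i + j + 1), ∑ l2 ∈ range (l1 + 1), m l1 l2 * c i j (schur l1 l2)

/-- h(t,v) = Σ_{l1 ≥ l2 ≥ 0} m(l1,l2) t^{l1-l2} v^{l2}, the multiplicity series. -/
def IsMultSeries (m : ℕ → ℕ → ℚ) (h : Q2) : Prop :=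
  ∀ p q : ℕ, c p q h = m (p + q) q

/-- Substitution of φ0, φ1 (series with zero constant term) for the two variables of h:
the coefficient of a monomial e in h(φ0,φ1) only receives contributions from monomials
t^p v^q of h with p + q ≤ |e|. -/
noncomputable def subst2 (φ0 φ1 h : Q2) : Q2 :=
  fun e => ∑ p ∈ range (e 0 + e 1 + 1), ∑ q ∈ range (e 0 + e 1 + 1),
    MvPowerSeries.coeff (mon p q) h * MvPowerSeries.coeff e (φ0 ^ p * φ1 ^ q)

/-- Substitution of a series φ with zero constant term into a one-variable series a. -/
noncomputable def substP (φ : Q2) (a : PowerSeries ℚ) : Q2 :=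
  fun e => ∑ k ∈ range (e 0 + e 1 + 1),
    PowerSeries.coeff k a * MvPowerSeries.coeff e (φ ^ k)

/-- Hilbert series of the mixed trace algebra T₂ of two generic 3×3 matrices
(Berele–Stembridge), with x = Xv 0, y = Xv 1. -/
noncomputable def Hseries : Q2 :=
  ((1 - Xv 0) ^ 2 * (1 - Xv 1) ^ 2 * (1 - Xv 0 ^ 2) * (1 - Xv 1 ^ 2)
    * (1 - Xv 0 * Xv 1) ^ 2 * (1 - Xv 0 ^ 2 * Xv 1) * (1 - Xv 0 * Xv 1 ^ 2))⁻¹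

/-- W(t,v), the multiplicity series of Theorem 2, with t = Xv 0, v = Xv 1;
h₃(v) = v²(v⁴−v³+3v²−v+1), h₂(v) = v(2v⁴−4v³+v²−v−1),
h₁(v) = v(−v⁴−v³+v²−4v+2), h₀(v) = v⁴−v³+3v²−v+1. -/
noncomputable def Wseries : Q2 :=
  (Xv 1 ^ 2 * (Xv 1 ^ 4 - Xv 1 ^ 3 + 3 * Xv 1 ^ 2 - Xv 1 + 1) * Xv 0 ^ 3
    + Xv 1 * (2 * Xv 1 ^ 4 - 4 * Xv 1 ^ 3 + Xv 1 ^ 2 - Xv 1 - 1) * Xv 0 ^ 2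
    + Xv 1 * (-Xv 1 ^ 4 - Xv 1 ^ 3 + Xv 1 ^ 2 - 4 * Xv 1 + 2) * Xv 0
    + (Xv 1 ^ 4 - Xv 1 ^ 3 + 3 * Xv 1 ^ 2 - Xv 1 + 1))
  * ((1 - Xv 1) ^ 7 * (1 + Xv 1) ^ 4 * (1 + Xv 1 ^ 2)
      * (1 - Xv 0) ^ 3 * (1 + Xv 0) * (1 - Xv 1 * Xv 0))⁻¹

-- core helpers
lemma mon_apply0 (i j : ℕ) : (mon i j) 0 = i := by
  simp [mon, Finsupp.single_apply]

lemma mon_apply1 (i j : ℕ) : (mon i j) 1 = j := by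
  simp [mon, Finsupp.single_apply]

lemma eq_mon (e : Fin 2 →₀ ℕ) : e = mon (e 0) (e 1) := by
  ext i
  fin_cases i
  · simp [mon_apply0]
  · simpa using (mon_apply1 (e 0) (e 1)).symm

lemma Q2ext {F G : Q2} (h : ∀ a b, c a b F = c a b G) : F = G := by
  apply MvPowerSeries.ext
  intro e
  rw [eq_mon e]
  exact h _ _

noncomputable def toS (g : ℕ → ℕ → ℚ) : Q2 := fun e => g (e 0) (e 1)

lemma c_toS (g : ℕ → ℕ → ℚ) (a b : ℕ) : c a b (toS g) = g a b := by
  rw [c, MvPowerSeries.coeff_apply]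
  show g (mon a b 0) (mon a b 1) = g a b
  rw [mon_apply0, mon_apply1]

lemma mon_sub0 (a b : ℕ) (h : 1 ≤ a) : mon a b - Finsupp.single 0 1 = mon (a-1) b := by
  ext i
  fin_cases i
  · simp [mon, Finsupp.single_apply, Finsupp.tsub_apply]
  · simp [mon, Finsupp.single_apply, Finsupp.tsub_apply]

lemma mon_sub1 (a b : ℕ) (h : 1 ≤ b) : mon a b - Finsupp.single 1 1 = mon a (b-1) := by
  ext i
  fin_cases i
  · simp [mon, Finsupp.single_apply, Finsupp.tsub_apply]
  · simp [mon, Finsupp.single_apply, Finsupp.tsub_apply]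

lemma c_mul_X0 (F : Q2) (a b : ℕ) :
    c a b (F * Xv 0) = if a = 0 then 0 else c (a-1) b F := by
  rw [c, Xv, MvPowerSeries.X_def, MvPowerSeries.coeff_mul_monomial]
  rcases Nat.eq_zero_or_pos a with h | h
  · subst h
    rw [if_neg, if_pos rfl]
    intro hle
    have := hle 0
    simp [mon, Finsupp.single_apply] at this
  · rw [if_pos, if_neg (by omega), mul_one, c, mon_sub0 a b h]
    rw [Finsupp.single_le_iff, mon_apply0]; omega

lemma c_mul_X1 (F : Q2) (a b : ℕ) :
    c a b (F * Xv 1) = if b = 0 then 0 else c a (b-1) F := by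
  rw [c, Xv, MvPowerSeries.X_def, MvPowerSeries.coeff_mul_monomial]
  rcases Nat.eq_zero_or_pos b with h | h
  · subst h
    rw [if_neg, if_pos rfl]
    intro hle
    have := hle 1
    simp [mon, Finsupp.single_apply] at this
  · rw [if_pos, if_neg (by omega), mul_one, c, mon_sub1 a b h]
    rw [Finsupp.single_le_iff, mon_apply1]; omega

lemma mon_eq_zero (a b : ℕ) : mon a b = 0 ↔ a = 0 ∧ b = 0 := by
  constructor
  · intro h
    constructor
    · have := congrArg (fun f => f 0) h; simpa [mon_apply0] using this
    · have := congrArg (fun f => f 1) h; simpa [mon_apply1] using this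
  · rintro ⟨rfl, rfl⟩; simp [mon]

lemma c_one (a b : ℕ) : c a b (1 : Q2) = if a = 0 ∧ b = 0 then 1 else 0 := by
  classical
  rw [c, MvPowerSeries.coeff_one]
  simp [mon_eq_zero]

lemma toS_one : toS (fun a b => (if a = 0 then (1:ℚ) else 0) * (if b = 0 then (1:ℚ) else 0)) = 1 := by
  apply Q2ext
  intro a b
  rw [c_toS, c_one]
  split_ifs with h1 h2 h3 <;> simp_all

-- linearity for c
lemma c_add (a b : ℕ) (F G : Q2) : c a b (F + G) = c a b F + c a b G := by
  simp [c]

lemma c_sub (a b : ℕ) (F G : Q2) : c a b (F - G) = c a b F - c a b G := by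
  simp [c]

lemma c_smul (a b : ℕ) (q : ℚ) (F : Q2) : c a b (MvPowerSeries.C (σ := Fin 2) (R := ℚ) q * F) = q * c a b F := by
  simp [c]

-- sequences
noncomputable def bin (m : ℕ) : ℕ → ℚ := fun b => (Nat.choose (b+m) m : ℚ)
noncomputable def sbin (m : ℕ) : ℕ → ℚ := fun b => (-1)^b * bin m b
noncomputable def del (k : ℕ) : ℕ → ℚ := fun b => if b = k then 1 else 0
noncomputable def i4q : ℕ → ℚ := fun b => if b % 4 = 1 then 1 else if b % 4 = 3 then -1 else 0
noncomputable def i4p : ℕ → ℚ := fun b => if b % 4 = 0 then 1 else if b % 4 = 2 then -1 else 0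

noncomputable def dOp (s : ℕ → ℚ) : ℕ → ℚ := fun a => s a - if a = 0 then 0 else s (a-1)
noncomputable def aOp (s : ℕ → ℚ) : ℕ → ℚ := fun a => s a + if a = 0 then 0 else s (a-1)
noncomputable def qOp (s : ℕ → ℚ) : ℕ → ℚ := fun b => s b + if b < 2 then 0 else s (b-2)

noncomputable def sepf (s r : ℕ → ℚ) : ℕ → ℕ → ℚ := fun a b => s a * r b
noncomputable def SP (s r : ℕ → ℚ) : Q2 := toS (sepf s r)
noncomputable def diagf (r : ℕ → ℚ) : ℕ → ℕ → ℚ := fun a b => if a ≤ b then r (b - a) else 0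

lemma SP_mul_dt (s r : ℕ → ℚ) : SP s r * (1 - Xv 0) = SP (dOp s) r := by
  apply Q2ext; intro a b
  rw [mul_sub, mul_one, c_sub, c_mul_X0]
  simp only [SP, c_toS, sepf, dOp]
  split_ifs <;> ring

lemma SP_mul_at (s r : ℕ → ℚ) : SP s r * (1 + Xv 0) = SP (aOp s) r := by
  apply Q2ext; intro a b
  rw [mul_add, mul_one, c_add, c_mul_X0]
  simp only [SP, c_toS, sepf, aOp]
  split_ifs <;> ring

lemma SP_mul_dv (s r : ℕ → ℚ) : SP s r * (1 - Xv 1) = SP s (dOp r) := by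
  apply Q2ext; intro a b
  rw [mul_sub, mul_one, c_sub, c_mul_X1]
  simp only [SP, c_toS, sepf, dOp]
  split_ifs <;> ring

lemma SP_mul_av (s r : ℕ → ℚ) : SP s r * (1 + Xv 1) = SP s (aOp r) := by
  apply Q2ext; intro a b
  rw [mul_add, mul_one, c_add, c_mul_X1]
  simp only [SP, c_toS, sepf, aOp]
  split_ifs <;> ring

lemma c_mul_X1X1 (F : Q2) (a b : ℕ) :
    c a b (F * (Xv 1 * Xv 1)) = if b < 2 then 0 else c a (b-2) F := by
  rw [← mul_assoc, c_mul_X1]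
  rcases Nat.lt_or_ge b 2 with h | h
  · rw [if_pos (by omega : b < 2)]
    interval_cases b
    · rw [if_pos rfl]
    · rw [if_neg (by omega), c_mul_X1, if_pos rfl]
  · rw [if_neg (by omega), c_mul_X1, if_neg (by omega), if_neg (by omega)]
    have e : b - 1 - 1 = b - 2 := by omega
    rw [e]

lemma SP_mul_qv (s r : ℕ → ℚ) : SP s r * (1 + Xv 1 ^ 2) = SP s (qOp r) := by
  apply Q2ext; intro a b
  rw [pow_two, mul_add, mul_one, c_add, c_mul_X1X1]
  simp only [SP, c_toS, sepf, qOp]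
  split_ifs <;> ring

-- sequence identities
lemma dOp_bin_succ (m : ℕ) : dOp (bin (m+1)) = bin m := by
  funext b
  cases b with
  | zero => simp [dOp, bin]
  | succ k =>
    simp only [dOp, bin, Nat.succ_ne_zero, if_false, Nat.add_sub_cancel]
    have e : k + 1 + (m+1) = (k + (m+1)) + 1 := by omega
    have e2 : k + (m+1) = k + 1 + m := by omega
    rw [e, Nat.choose_succ_succ', e2]
    push_cast
    ring
lemma dOp_bin_zero : dOp (bin 0) = del 0 := by
  funext b
  cases b with
  | zero => simp [dOp, bin, del]
  | succ k => simp [dOp, bin, del]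
lemma aOp_sbin_succ (m : ℕ) : aOp (sbin (m+1)) = sbin m := by
  funext b
  cases b with
  | zero => simp [aOp, sbin, bin]
  | succ k =>
    simp only [aOp, sbin, bin, Nat.succ_ne_zero, if_false, Nat.add_sub_cancel]
    have e : k + 1 + (m+1) = (k + (m+1)) + 1 := by omega
    have e2 : k + (m+1) = k + 1 + m := by omega
    rw [e, Nat.choose_succ_succ', e2, pow_succ]
    push_cast
    ring
lemma aOp_sbin_zero : aOp (sbin 0) = del 0 := by
  funext b
  cases b with
  | zero => simp [aOp, sbin, bin, del]
  | succ k => simp [aOp, sbin, bin, del, pow_succ]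
lemma qOp_i4p : qOp i4p = del 0 := by
  funext b
  rcases Nat.lt_or_ge b 2 with h | h
  · interval_cases b <;> simp [qOp, i4p, del]
  · have h4 : b % 4 = 0 ∨ b % 4 = 1 ∨ b % 4 = 2 ∨ b % 4 = 3 := by omega
    rw [qOp]
    rcases h4 with h4 | h4 | h4 | h4 <;>
      · have h2 : (b-2) % 4 = (b % 4 + 2) % 4 := by omega
        have hb0 : b ≠ 0 := by omega
        have hb1 : b ≠ 1 := by omega
        rw [if_neg (by omega)]
        simp [i4p, del, h4, h2, hb0, hb1]
lemma qOp_i4q : qOp i4q = del 1 := by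
  funext b
  rcases Nat.lt_or_ge b 2 with h | h
  · interval_cases b <;> simp [qOp, i4q, del]
  · have h4 : b % 4 = 0 ∨ b % 4 = 1 ∨ b % 4 = 2 ∨ b % 4 = 3 := by omega
    rw [qOp]
    rcases h4 with h4 | h4 | h4 | h4 <;>
      · have h2 : (b-2) % 4 = (b % 4 + 2) % 4 := by omega
        have hb0 : b ≠ 0 := by omega
        have hb1 : b ≠ 1 := by omega
        rw [if_neg (by omega)]
        simp [i4q, del, h4, h2, hb0, hb1]

-- power chain lemmas
lemma SP_bin_t (r : ℕ → ℚ) : ∀ mt, SP (bin mt) r * (1 - Xv 0)^(mt+1) = SP (del 0) r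
  | 0 => by rw [pow_one, SP_mul_dt, dOp_bin_zero]
  | (m+1) => by
      rw [pow_succ', ← mul_assoc, SP_mul_dt, dOp_bin_succ]
      exact SP_bin_t r m
lemma SP_bin_v (s : ℕ → ℚ) : ∀ mv, SP s (bin mv) * (1 - Xv 1)^(mv+1) = SP s (del 0)
  | 0 => by rw [pow_one, SP_mul_dv, dOp_bin_zero]
  | (m+1) => by
      rw [pow_succ', ← mul_assoc, SP_mul_dv, dOp_bin_succ]
      exact SP_bin_v s m
lemma SP_sbin_t (r : ℕ → ℚ) : SP (sbin 0) r * (1 + Xv 0) = SP (del 0) r := by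
  rw [SP_mul_at, aOp_sbin_zero]
lemma SP_sbin_v (s : ℕ → ℚ) : ∀ mv, SP s (sbin mv) * (1 + Xv 1)^(mv+1) = SP s (del 0)
  | 0 => by rw [pow_one, SP_mul_av, aOp_sbin_zero]
  | (m+1) => by
      rw [pow_succ', ← mul_assoc, SP_mul_av, aOp_sbin_succ]
      exact SP_sbin_v s m
lemma SP_i4p_v (s : ℕ → ℚ) : SP s i4p * (1 + Xv 1 ^ 2) = SP s (del 0) := by
  rw [SP_mul_qv, qOp_i4p]
lemma SP_i4q_v (s : ℕ → ℚ) : SP s i4q * (1 + Xv 1 ^ 2) = SP s (del 1) := by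
  rw [SP_mul_qv, qOp_i4q]

lemma SP_del_del : SP (del 0) (del 0) = 1 := by
  apply Q2ext; intro a b
  rw [c_one, SP, c_toS]
  simp only [sepf, del]
  split_ifs <;> simp_all

lemma mon_eq_single1 (a b : ℕ) : mon a b = Finsupp.single 1 1 ↔ a = 0 ∧ b = 1 := by
  constructor
  · intro h
    constructor
    · have := congrArg (fun f => f 0) h
      simpa [mon_apply0, Finsupp.single_apply] using this
    · have := congrArg (fun f => f 1) h
      simpa [mon_apply1, Finsupp.single_apply] using this
  · rintro ⟨rfl, rfl⟩
    ext i; fin_cases i <;> simp [mon, Finsupp.single_apply]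

lemma SP_del_del1 : SP (del 0) (del 1) = Xv 1 := by
  apply Q2ext; intro a b
  rw [SP, c_toS, c, Xv, MvPowerSeries.coeff_X]
  simp only [sepf, del, mon_eq_single1]
  split_ifs <;> simp_all

lemma diag_mul (r : ℕ → ℚ) : toS (diagf r) * (1 - Xv 1 * Xv 0) = SP (del 0) r := by
  apply Q2ext; intro a b
  rw [mul_sub, mul_one, c_sub, ← mul_assoc, c_mul_X0, SP, c_toS, c_toS]
  simp only [sepf]
  rcases Nat.eq_zero_or_pos a with rfl | ha
  · simp [diagf, del]
  · rw [if_neg (by omega : ¬ a = 0), c_mul_X1, del, if_neg (by omega : ¬ a = 0), zero_mul]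
    rcases Nat.eq_zero_or_pos b with rfl | hb
    · have hna : ¬ a ≤ 0 := by omega
      simp [diagf, hna]
    · rw [if_neg (by omega : ¬ b = 0), c_toS]
      simp only [diagf]
      by_cases hab : a ≤ b
      · rw [if_pos hab, if_pos (by omega : a - 1 ≤ b - 1)]
        have e : b - 1 - (a - 1) = b - a := by omega
        rw [e, sub_self]
      · rw [if_neg hab, if_neg (by omega : ¬ a - 1 ≤ b - 1), sub_zero]

-- C/int helpers
lemma c_int_mul (n : ℤ) (F : Q2) (a b : ℕ) : c a b ((n : Q2) * F) = (n : ℚ) * c a b F := by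
  have : ((n : ℤ) : Q2) = MvPowerSeries.C (σ := Fin 2) (R := ℚ) ((n : ℤ) : ℚ) := by
    rw [map_intCast]
  rw [this, c, MvPowerSeries.coeff_C_mul, c]


-- ==== generated part ====
noncomputable def DD : Q2 :=
  (1 - Xv 0) ^ 3 * (1 + Xv 0) * (1 - Xv 1 * Xv 0) * (1 - Xv 1) ^ 8 * (1 + Xv 1) ^ 4 * (1 + Xv 1 ^ 2)

noncomputable def NW : Q2 :=
  (Xv 1 ^ 2 * (Xv 1 ^ 4 - Xv 1 ^ 3 + 3 * Xv 1 ^ 2 - Xv 1 + 1) * Xv 0 ^ 3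
    + Xv 1 * (2 * Xv 1 ^ 4 - 4 * Xv 1 ^ 3 + Xv 1 ^ 2 - Xv 1 - 1) * Xv 0 ^ 2
    + Xv 1 * (-Xv 1 ^ 4 - Xv 1 ^ 3 + Xv 1 ^ 2 - 4 * Xv 1 + 2) * Xv 0
    + (Xv 1 ^ 4 - Xv 1 ^ 3 + 3 * Xv 1 ^ 2 - Xv 1 + 1))

noncomputable def DW : Q2 :=
  ((1 - Xv 1) ^ 7 * (1 + Xv 1) ^ 4 * (1 + Xv 1 ^ 2)
      * (1 - Xv 0) ^ 3 * (1 + Xv 0) * (1 - Xv 1 * Xv 0))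

lemma L1 : SP (bin 2) (bin 0) * DD = (1 + Xv 0) * (1 - Xv 1 * Xv 0) * (1 - Xv 1) ^ 7 * (1 + Xv 1) ^ 4 * (1 + Xv 1 ^ 2) := by
  have h : SP (bin 2) (bin 0) * DD = SP (bin 2) (bin 0) * (1 - Xv 0) ^ (2 + 1) * (1 - Xv 1) ^ (0 + 1) * ((1 + Xv 0) * (1 - Xv 1 * Xv 0) * (1 - Xv 1) ^ 7 * (1 + Xv 1) ^ 4 * (1 + Xv 1 ^ 2)) := by
    rw [DD]; ring
  rw [h, SP_bin_t, SP_bin_v, SP_del_del, one_mul]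
lemma L2 : SP (bin 2) (bin 1) * DD = (1 + Xv 0) * (1 - Xv 1 * Xv 0) * (1 - Xv 1) ^ 6 * (1 + Xv 1) ^ 4 * (1 + Xv 1 ^ 2) := by
  have h : SP (bin 2) (bin 1) * DD = SP (bin 2) (bin 1) * (1 - Xv 0) ^ (2 + 1) * (1 - Xv 1) ^ (1 + 1) * ((1 + Xv 0) * (1 - Xv 1 * Xv 0) * (1 - Xv 1) ^ 6 * (1 + Xv 1) ^ 4 * (1 + Xv 1 ^ 2)) := by
    rw [DD]; ring
  rw [h, SP_bin_t, SP_bin_v, SP_del_del, one_mul]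
lemma L3 : SP (bin 2) (bin 2) * DD = (1 + Xv 0) * (1 - Xv 1 * Xv 0) * (1 - Xv 1) ^ 5 * (1 + Xv 1) ^ 4 * (1 + Xv 1 ^ 2) := by
  have h : SP (bin 2) (bin 2) * DD = SP (bin 2) (bin 2) * (1 - Xv 0) ^ (2 + 1) * (1 - Xv 1) ^ (2 + 1) * ((1 + Xv 0) * (1 - Xv 1 * Xv 0) * (1 - Xv 1) ^ 5 * (1 + Xv 1) ^ 4 * (1 + Xv 1 ^ 2)) := by
    rw [DD]; ring
  rw [h, SP_bin_t, SP_bin_v, SP_del_del, one_mul]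
lemma L4 : SP (bin 2) (bin 3) * DD = (1 + Xv 0) * (1 - Xv 1 * Xv 0) * (1 - Xv 1) ^ 4 * (1 + Xv 1) ^ 4 * (1 + Xv 1 ^ 2) := by
  have h : SP (bin 2) (bin 3) * DD = SP (bin 2) (bin 3) * (1 - Xv 0) ^ (2 + 1) * (1 - Xv 1) ^ (3 + 1) * ((1 + Xv 0) * (1 - Xv 1 * Xv 0) * (1 - Xv 1) ^ 4 * (1 + Xv 1) ^ 4 * (1 + Xv 1 ^ 2)) := by
    rw [DD]; ring
  rw [h, SP_bin_t, SP_bin_v, SP_del_del, one_mul]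
lemma L5 : SP (bin 2) (bin 4) * DD = (1 + Xv 0) * (1 - Xv 1 * Xv 0) * (1 - Xv 1) ^ 3 * (1 + Xv 1) ^ 4 * (1 + Xv 1 ^ 2) := by
  have h : SP (bin 2) (bin 4) * DD = SP (bin 2) (bin 4) * (1 - Xv 0) ^ (2 + 1) * (1 - Xv 1) ^ (4 + 1) * ((1 + Xv 0) * (1 - Xv 1 * Xv 0) * (1 - Xv 1) ^ 3 * (1 + Xv 1) ^ 4 * (1 + Xv 1 ^ 2)) := by
    rw [DD]; ring
  rw [h, SP_bin_t, SP_bin_v, SP_del_del, one_mul]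
lemma L6 : SP (bin 2) (bin 5) * DD = (1 + Xv 0) * (1 - Xv 1 * Xv 0) * (1 - Xv 1) ^ 2 * (1 + Xv 1) ^ 4 * (1 + Xv 1 ^ 2) := by
  have h : SP (bin 2) (bin 5) * DD = SP (bin 2) (bin 5) * (1 - Xv 0) ^ (2 + 1) * (1 - Xv 1) ^ (5 + 1) * ((1 + Xv 0) * (1 - Xv 1 * Xv 0) * (1 - Xv 1) ^ 2 * (1 + Xv 1) ^ 4 * (1 + Xv 1 ^ 2)) := by
    rw [DD]; ring
  rw [h, SP_bin_t, SP_bin_v, SP_del_del, one_mul]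
lemma L7 : SP (bin 2) (sbin 0) * DD = (1 + Xv 0) * (1 - Xv 1 * Xv 0) * (1 - Xv 1) ^ 8 * (1 + Xv 1) ^ 3 * (1 + Xv 1 ^ 2) := by
  have h : SP (bin 2) (sbin 0) * DD = SP (bin 2) (sbin 0) * (1 - Xv 0) ^ (2 + 1) * (1 + Xv 1) ^ (0 + 1) * ((1 + Xv 0) * (1 - Xv 1 * Xv 0) * (1 - Xv 1) ^ 8 * (1 + Xv 1) ^ 3 * (1 + Xv 1 ^ 2)) := by
    rw [DD]; ring
  rw [h, SP_bin_t, SP_sbin_v, SP_del_del, one_mul]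
lemma L8 : SP (bin 2) (sbin 1) * DD = (1 + Xv 0) * (1 - Xv 1 * Xv 0) * (1 - Xv 1) ^ 8 * (1 + Xv 1) ^ 2 * (1 + Xv 1 ^ 2) := by
  have h : SP (bin 2) (sbin 1) * DD = SP (bin 2) (sbin 1) * (1 - Xv 0) ^ (2 + 1) * (1 + Xv 1) ^ (1 + 1) * ((1 + Xv 0) * (1 - Xv 1 * Xv 0) * (1 - Xv 1) ^ 8 * (1 + Xv 1) ^ 2 * (1 + Xv 1 ^ 2)) := by
    rw [DD]; ring
  rw [h, SP_bin_t, SP_sbin_v, SP_del_del, one_mul]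
lemma L9 : SP (bin 1) (bin 0) * DD = (1 - Xv 0) ^ 1 * (1 + Xv 0) * (1 - Xv 1 * Xv 0) * (1 - Xv 1) ^ 7 * (1 + Xv 1) ^ 4 * (1 + Xv 1 ^ 2) := by
  have h : SP (bin 1) (bin 0) * DD = SP (bin 1) (bin 0) * (1 - Xv 0) ^ (1 + 1) * (1 - Xv 1) ^ (0 + 1) * ((1 - Xv 0) ^ 1 * (1 + Xv 0) * (1 - Xv 1 * Xv 0) * (1 - Xv 1) ^ 7 * (1 + Xv 1) ^ 4 * (1 + Xv 1 ^ 2)) := by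
    rw [DD]; ring
  rw [h, SP_bin_t, SP_bin_v, SP_del_del, one_mul]
lemma L10 : SP (bin 1) (bin 1) * DD = (1 - Xv 0) ^ 1 * (1 + Xv 0) * (1 - Xv 1 * Xv 0) * (1 - Xv 1) ^ 6 * (1 + Xv 1) ^ 4 * (1 + Xv 1 ^ 2) := by
  have h : SP (bin 1) (bin 1) * DD = SP (bin 1) (bin 1) * (1 - Xv 0) ^ (1 + 1) * (1 - Xv 1) ^ (1 + 1) * ((1 - Xv 0) ^ 1 * (1 + Xv 0) * (1 - Xv 1 * Xv 0) * (1 - Xv 1) ^ 6 * (1 + Xv 1) ^ 4 * (1 + Xv 1 ^ 2)) := by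
    rw [DD]; ring
  rw [h, SP_bin_t, SP_bin_v, SP_del_del, one_mul]
lemma L11 : SP (bin 1) (bin 2) * DD = (1 - Xv 0) ^ 1 * (1 + Xv 0) * (1 - Xv 1 * Xv 0) * (1 - Xv 1) ^ 5 * (1 + Xv 1) ^ 4 * (1 + Xv 1 ^ 2) := by
  have h : SP (bin 1) (bin 2) * DD = SP (bin 1) (bin 2) * (1 - Xv 0) ^ (1 + 1) * (1 - Xv 1) ^ (2 + 1) * ((1 - Xv 0) ^ 1 * (1 + Xv 0) * (1 - Xv 1 * Xv 0) * (1 - Xv 1) ^ 5 * (1 + Xv 1) ^ 4 * (1 + Xv 1 ^ 2)) := by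
    rw [DD]; ring
  rw [h, SP_bin_t, SP_bin_v, SP_del_del, one_mul]
lemma L12 : SP (bin 1) (bin 3) * DD = (1 - Xv 0) ^ 1 * (1 + Xv 0) * (1 - Xv 1 * Xv 0) * (1 - Xv 1) ^ 4 * (1 + Xv 1) ^ 4 * (1 + Xv 1 ^ 2) := by
  have h : SP (bin 1) (bin 3) * DD = SP (bin 1) (bin 3) * (1 - Xv 0) ^ (1 + 1) * (1 - Xv 1) ^ (3 + 1) * ((1 - Xv 0) ^ 1 * (1 + Xv 0) * (1 - Xv 1 * Xv 0) * (1 - Xv 1) ^ 4 * (1 + Xv 1) ^ 4 * (1 + Xv 1 ^ 2)) := by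
    rw [DD]; ring
  rw [h, SP_bin_t, SP_bin_v, SP_del_del, one_mul]
lemma L13 : SP (bin 1) (bin 5) * DD = (1 - Xv 0) ^ 1 * (1 + Xv 0) * (1 - Xv 1 * Xv 0) * (1 - Xv 1) ^ 2 * (1 + Xv 1) ^ 4 * (1 + Xv 1 ^ 2) := by
  have h : SP (bin 1) (bin 5) * DD = SP (bin 1) (bin 5) * (1 - Xv 0) ^ (1 + 1) * (1 - Xv 1) ^ (5 + 1) * ((1 - Xv 0) ^ 1 * (1 + Xv 0) * (1 - Xv 1 * Xv 0) * (1 - Xv 1) ^ 2 * (1 + Xv 1) ^ 4 * (1 + Xv 1 ^ 2)) := by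
    rw [DD]; ring
  rw [h, SP_bin_t, SP_bin_v, SP_del_del, one_mul]
lemma L14 : SP (bin 1) (bin 6) * DD = (1 - Xv 0) ^ 1 * (1 + Xv 0) * (1 - Xv 1 * Xv 0) * (1 - Xv 1) ^ 1 * (1 + Xv 1) ^ 4 * (1 + Xv 1 ^ 2) := by
  have h : SP (bin 1) (bin 6) * DD = SP (bin 1) (bin 6) * (1 - Xv 0) ^ (1 + 1) * (1 - Xv 1) ^ (6 + 1) * ((1 - Xv 0) ^ 1 * (1 + Xv 0) * (1 - Xv 1 * Xv 0) * (1 - Xv 1) ^ 1 * (1 + Xv 1) ^ 4 * (1 + Xv 1 ^ 2)) := by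
    rw [DD]; ring
  rw [h, SP_bin_t, SP_bin_v, SP_del_del, one_mul]
lemma L15 : SP (bin 1) (sbin 0) * DD = (1 - Xv 0) ^ 1 * (1 + Xv 0) * (1 - Xv 1 * Xv 0) * (1 - Xv 1) ^ 8 * (1 + Xv 1) ^ 3 * (1 + Xv 1 ^ 2) := by
  have h : SP (bin 1) (sbin 0) * DD = SP (bin 1) (sbin 0) * (1 - Xv 0) ^ (1 + 1) * (1 + Xv 1) ^ (0 + 1) * ((1 - Xv 0) ^ 1 * (1 + Xv 0) * (1 - Xv 1 * Xv 0) * (1 - Xv 1) ^ 8 * (1 + Xv 1) ^ 3 * (1 + Xv 1 ^ 2)) := by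
    rw [DD]; ring
  rw [h, SP_bin_t, SP_sbin_v, SP_del_del, one_mul]
lemma L16 : SP (bin 1) (sbin 1) * DD = (1 - Xv 0) ^ 1 * (1 + Xv 0) * (1 - Xv 1 * Xv 0) * (1 - Xv 1) ^ 8 * (1 + Xv 1) ^ 2 * (1 + Xv 1 ^ 2) := by
  have h : SP (bin 1) (sbin 1) * DD = SP (bin 1) (sbin 1) * (1 - Xv 0) ^ (1 + 1) * (1 + Xv 1) ^ (1 + 1) * ((1 - Xv 0) ^ 1 * (1 + Xv 0) * (1 - Xv 1 * Xv 0) * (1 - Xv 1) ^ 8 * (1 + Xv 1) ^ 2 * (1 + Xv 1 ^ 2)) := by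
    rw [DD]; ring
  rw [h, SP_bin_t, SP_sbin_v, SP_del_del, one_mul]
lemma L17 : SP (bin 1) (sbin 2) * DD = (1 - Xv 0) ^ 1 * (1 + Xv 0) * (1 - Xv 1 * Xv 0) * (1 - Xv 1) ^ 8 * (1 + Xv 1) ^ 1 * (1 + Xv 1 ^ 2) := by
  have h : SP (bin 1) (sbin 2) * DD = SP (bin 1) (sbin 2) * (1 - Xv 0) ^ (1 + 1) * (1 + Xv 1) ^ (2 + 1) * ((1 - Xv 0) ^ 1 * (1 + Xv 0) * (1 - Xv 1 * Xv 0) * (1 - Xv 1) ^ 8 * (1 + Xv 1) ^ 1 * (1 + Xv 1 ^ 2)) := by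
    rw [DD]; ring
  rw [h, SP_bin_t, SP_sbin_v, SP_del_del, one_mul]
lemma L18 : SP (bin 0) (bin 0) * DD = (1 - Xv 0) ^ 2 * (1 + Xv 0) * (1 - Xv 1 * Xv 0) * (1 - Xv 1) ^ 7 * (1 + Xv 1) ^ 4 * (1 + Xv 1 ^ 2) := by
  have h : SP (bin 0) (bin 0) * DD = SP (bin 0) (bin 0) * (1 - Xv 0) ^ (0 + 1) * (1 - Xv 1) ^ (0 + 1) * ((1 - Xv 0) ^ 2 * (1 + Xv 0) * (1 - Xv 1 * Xv 0) * (1 - Xv 1) ^ 7 * (1 + Xv 1) ^ 4 * (1 + Xv 1 ^ 2)) := by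
    rw [DD]; ring
  rw [h, SP_bin_t, SP_bin_v, SP_del_del, one_mul]
lemma L19 : SP (bin 0) (bin 1) * DD = (1 - Xv 0) ^ 2 * (1 + Xv 0) * (1 - Xv 1 * Xv 0) * (1 - Xv 1) ^ 6 * (1 + Xv 1) ^ 4 * (1 + Xv 1 ^ 2) := by
  have h : SP (bin 0) (bin 1) * DD = SP (bin 0) (bin 1) * (1 - Xv 0) ^ (0 + 1) * (1 - Xv 1) ^ (1 + 1) * ((1 - Xv 0) ^ 2 * (1 + Xv 0) * (1 - Xv 1 * Xv 0) * (1 - Xv 1) ^ 6 * (1 + Xv 1) ^ 4 * (1 + Xv 1 ^ 2)) := by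
    rw [DD]; ring
  rw [h, SP_bin_t, SP_bin_v, SP_del_del, one_mul]
lemma L20 : SP (bin 0) (bin 2) * DD = (1 - Xv 0) ^ 2 * (1 + Xv 0) * (1 - Xv 1 * Xv 0) * (1 - Xv 1) ^ 5 * (1 + Xv 1) ^ 4 * (1 + Xv 1 ^ 2) := by
  have h : SP (bin 0) (bin 2) * DD = SP (bin 0) (bin 2) * (1 - Xv 0) ^ (0 + 1) * (1 - Xv 1) ^ (2 + 1) * ((1 - Xv 0) ^ 2 * (1 + Xv 0) * (1 - Xv 1 * Xv 0) * (1 - Xv 1) ^ 5 * (1 + Xv 1) ^ 4 * (1 + Xv 1 ^ 2)) := by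
    rw [DD]; ring
  rw [h, SP_bin_t, SP_bin_v, SP_del_del, one_mul]
lemma L21 : SP (bin 0) (bin 3) * DD = (1 - Xv 0) ^ 2 * (1 + Xv 0) * (1 - Xv 1 * Xv 0) * (1 - Xv 1) ^ 4 * (1 + Xv 1) ^ 4 * (1 + Xv 1 ^ 2) := by
  have h : SP (bin 0) (bin 3) * DD = SP (bin 0) (bin 3) * (1 - Xv 0) ^ (0 + 1) * (1 - Xv 1) ^ (3 + 1) * ((1 - Xv 0) ^ 2 * (1 + Xv 0) * (1 - Xv 1 * Xv 0) * (1 - Xv 1) ^ 4 * (1 + Xv 1) ^ 4 * (1 + Xv 1 ^ 2)) := by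
    rw [DD]; ring
  rw [h, SP_bin_t, SP_bin_v, SP_del_del, one_mul]
lemma L22 : SP (bin 0) (bin 4) * DD = (1 - Xv 0) ^ 2 * (1 + Xv 0) * (1 - Xv 1 * Xv 0) * (1 - Xv 1) ^ 3 * (1 + Xv 1) ^ 4 * (1 + Xv 1 ^ 2) := by
  have h : SP (bin 0) (bin 4) * DD = SP (bin 0) (bin 4) * (1 - Xv 0) ^ (0 + 1) * (1 - Xv 1) ^ (4 + 1) * ((1 - Xv 0) ^ 2 * (1 + Xv 0) * (1 - Xv 1 * Xv 0) * (1 - Xv 1) ^ 3 * (1 + Xv 1) ^ 4 * (1 + Xv 1 ^ 2)) := by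
    rw [DD]; ring
  rw [h, SP_bin_t, SP_bin_v, SP_del_del, one_mul]
lemma L23 : SP (bin 0) (bin 5) * DD = (1 - Xv 0) ^ 2 * (1 + Xv 0) * (1 - Xv 1 * Xv 0) * (1 - Xv 1) ^ 2 * (1 + Xv 1) ^ 4 * (1 + Xv 1 ^ 2) := by
  have h : SP (bin 0) (bin 5) * DD = SP (bin 0) (bin 5) * (1 - Xv 0) ^ (0 + 1) * (1 - Xv 1) ^ (5 + 1) * ((1 - Xv 0) ^ 2 * (1 + Xv 0) * (1 - Xv 1 * Xv 0) * (1 - Xv 1) ^ 2 * (1 + Xv 1) ^ 4 * (1 + Xv 1 ^ 2)) := by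
    rw [DD]; ring
  rw [h, SP_bin_t, SP_bin_v, SP_del_del, one_mul]
lemma L24 : SP (bin 0) (bin 7) * DD = (1 - Xv 0) ^ 2 * (1 + Xv 0) * (1 - Xv 1 * Xv 0) * (1 + Xv 1) ^ 4 * (1 + Xv 1 ^ 2) := by
  have h : SP (bin 0) (bin 7) * DD = SP (bin 0) (bin 7) * (1 - Xv 0) ^ (0 + 1) * (1 - Xv 1) ^ (7 + 1) * ((1 - Xv 0) ^ 2 * (1 + Xv 0) * (1 - Xv 1 * Xv 0) * (1 + Xv 1) ^ 4 * (1 + Xv 1 ^ 2)) := by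
    rw [DD]; ring
  rw [h, SP_bin_t, SP_bin_v, SP_del_del, one_mul]
lemma L25 : SP (bin 0) (sbin 0) * DD = (1 - Xv 0) ^ 2 * (1 + Xv 0) * (1 - Xv 1 * Xv 0) * (1 - Xv 1) ^ 8 * (1 + Xv 1) ^ 3 * (1 + Xv 1 ^ 2) := by
  have h : SP (bin 0) (sbin 0) * DD = SP (bin 0) (sbin 0) * (1 - Xv 0) ^ (0 + 1) * (1 + Xv 1) ^ (0 + 1) * ((1 - Xv 0) ^ 2 * (1 + Xv 0) * (1 - Xv 1 * Xv 0) * (1 - Xv 1) ^ 8 * (1 + Xv 1) ^ 3 * (1 + Xv 1 ^ 2)) := by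
    rw [DD]; ring
  rw [h, SP_bin_t, SP_sbin_v, SP_del_del, one_mul]
lemma L26 : SP (bin 0) (sbin 1) * DD = (1 - Xv 0) ^ 2 * (1 + Xv 0) * (1 - Xv 1 * Xv 0) * (1 - Xv 1) ^ 8 * (1 + Xv 1) ^ 2 * (1 + Xv 1 ^ 2) := by
  have h : SP (bin 0) (sbin 1) * DD = SP (bin 0) (sbin 1) * (1 - Xv 0) ^ (0 + 1) * (1 + Xv 1) ^ (1 + 1) * ((1 - Xv 0) ^ 2 * (1 + Xv 0) * (1 - Xv 1 * Xv 0) * (1 - Xv 1) ^ 8 * (1 + Xv 1) ^ 2 * (1 + Xv 1 ^ 2)) := by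
    rw [DD]; ring
  rw [h, SP_bin_t, SP_sbin_v, SP_del_del, one_mul]
lemma L27 : SP (bin 0) (sbin 2) * DD = (1 - Xv 0) ^ 2 * (1 + Xv 0) * (1 - Xv 1 * Xv 0) * (1 - Xv 1) ^ 8 * (1 + Xv 1) ^ 1 * (1 + Xv 1 ^ 2) := by
  have h : SP (bin 0) (sbin 2) * DD = SP (bin 0) (sbin 2) * (1 - Xv 0) ^ (0 + 1) * (1 + Xv 1) ^ (2 + 1) * ((1 - Xv 0) ^ 2 * (1 + Xv 0) * (1 - Xv 1 * Xv 0) * (1 - Xv 1) ^ 8 * (1 + Xv 1) ^ 1 * (1 + Xv 1 ^ 2)) := by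
    rw [DD]; ring
  rw [h, SP_bin_t, SP_sbin_v, SP_del_del, one_mul]
lemma L28 : SP (bin 0) (sbin 3) * DD = (1 - Xv 0) ^ 2 * (1 + Xv 0) * (1 - Xv 1 * Xv 0) * (1 - Xv 1) ^ 8 * (1 + Xv 1 ^ 2) := by
  have h : SP (bin 0) (sbin 3) * DD = SP (bin 0) (sbin 3) * (1 - Xv 0) ^ (0 + 1) * (1 + Xv 1) ^ (3 + 1) * ((1 - Xv 0) ^ 2 * (1 + Xv 0) * (1 - Xv 1 * Xv 0) * (1 - Xv 1) ^ 8 * (1 + Xv 1 ^ 2)) := by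
    rw [DD]; ring
  rw [h, SP_bin_t, SP_sbin_v, SP_del_del, one_mul]
lemma L29 : SP (sbin 0) (bin 0) * DD = (1 - Xv 0) ^ 3 * (1 - Xv 1 * Xv 0) * (1 - Xv 1) ^ 7 * (1 + Xv 1) ^ 4 * (1 + Xv 1 ^ 2) := by
  have h : SP (sbin 0) (bin 0) * DD = SP (sbin 0) (bin 0) * (1 + Xv 0) * (1 - Xv 1) ^ (0 + 1) * ((1 - Xv 0) ^ 3 * (1 - Xv 1 * Xv 0) * (1 - Xv 1) ^ 7 * (1 + Xv 1) ^ 4 * (1 + Xv 1 ^ 2)) := by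
    rw [DD]; ring
  rw [h, SP_sbin_t, SP_bin_v, SP_del_del, one_mul]
lemma L30 : SP (sbin 0) (bin 1) * DD = (1 - Xv 0) ^ 3 * (1 - Xv 1 * Xv 0) * (1 - Xv 1) ^ 6 * (1 + Xv 1) ^ 4 * (1 + Xv 1 ^ 2) := by
  have h : SP (sbin 0) (bin 1) * DD = SP (sbin 0) (bin 1) * (1 + Xv 0) * (1 - Xv 1) ^ (1 + 1) * ((1 - Xv 0) ^ 3 * (1 - Xv 1 * Xv 0) * (1 - Xv 1) ^ 6 * (1 + Xv 1) ^ 4 * (1 + Xv 1 ^ 2)) := by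
    rw [DD]; ring
  rw [h, SP_sbin_t, SP_bin_v, SP_del_del, one_mul]
lemma L31 : SP (sbin 0) (sbin 0) * DD = (1 - Xv 0) ^ 3 * (1 - Xv 1 * Xv 0) * (1 - Xv 1) ^ 8 * (1 + Xv 1) ^ 3 * (1 + Xv 1 ^ 2) := by
  have h : SP (sbin 0) (sbin 0) * DD = SP (sbin 0) (sbin 0) * (1 + Xv 0) * (1 + Xv 1) ^ (0 + 1) * ((1 - Xv 0) ^ 3 * (1 - Xv 1 * Xv 0) * (1 - Xv 1) ^ 8 * (1 + Xv 1) ^ 3 * (1 + Xv 1 ^ 2)) := by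
    rw [DD]; ring
  rw [h, SP_sbin_t, SP_sbin_v, SP_del_del, one_mul]
lemma L32 : SP (sbin 0) (sbin 1) * DD = (1 - Xv 0) ^ 3 * (1 - Xv 1 * Xv 0) * (1 - Xv 1) ^ 8 * (1 + Xv 1) ^ 2 * (1 + Xv 1 ^ 2) := by
  have h : SP (sbin 0) (sbin 1) * DD = SP (sbin 0) (sbin 1) * (1 + Xv 0) * (1 + Xv 1) ^ (1 + 1) * ((1 - Xv 0) ^ 3 * (1 - Xv 1 * Xv 0) * (1 - Xv 1) ^ 8 * (1 + Xv 1) ^ 2 * (1 + Xv 1 ^ 2)) := by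
    rw [DD]; ring
  rw [h, SP_sbin_t, SP_sbin_v, SP_del_del, one_mul]
lemma L33 : SP (sbin 0) (sbin 2) * DD = (1 - Xv 0) ^ 3 * (1 - Xv 1 * Xv 0) * (1 - Xv 1) ^ 8 * (1 + Xv 1) ^ 1 * (1 + Xv 1 ^ 2) := by
  have h : SP (sbin 0) (sbin 2) * DD = SP (sbin 0) (sbin 2) * (1 + Xv 0) * (1 + Xv 1) ^ (2 + 1) * ((1 - Xv 0) ^ 3 * (1 - Xv 1 * Xv 0) * (1 - Xv 1) ^ 8 * (1 + Xv 1) ^ 1 * (1 + Xv 1 ^ 2)) := by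
    rw [DD]; ring
  rw [h, SP_sbin_t, SP_sbin_v, SP_del_del, one_mul]
lemma L34 : SP (sbin 0) (sbin 3) * DD = (1 - Xv 0) ^ 3 * (1 - Xv 1 * Xv 0) * (1 - Xv 1) ^ 8 * (1 + Xv 1 ^ 2) := by
  have h : SP (sbin 0) (sbin 3) * DD = SP (sbin 0) (sbin 3) * (1 + Xv 0) * (1 + Xv 1) ^ (3 + 1) * ((1 - Xv 0) ^ 3 * (1 - Xv 1 * Xv 0) * (1 - Xv 1) ^ 8 * (1 + Xv 1 ^ 2)) := by
    rw [DD]; ring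
  rw [h, SP_sbin_t, SP_sbin_v, SP_del_del, one_mul]
lemma L35 : SP (sbin 0) i4q * DD = Xv 1 * ((1 - Xv 0) ^ 3 * (1 - Xv 1 * Xv 0) * (1 - Xv 1) ^ 8 * (1 + Xv 1) ^ 4) := by
  have h : SP (sbin 0) i4q * DD = SP (sbin 0) i4q * (1 + Xv 0) * (1 + Xv 1 ^ 2) * ((1 - Xv 0) ^ 3 * (1 - Xv 1 * Xv 0) * (1 - Xv 1) ^ 8 * (1 + Xv 1) ^ 4) := by
    rw [DD]; ring
  rw [h, SP_sbin_t, SP_i4q_v, SP_del_del1]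
lemma L36 : toS (diagf (bin 0)) * DD = (1 - Xv 0) ^ 3 * (1 + Xv 0) * (1 - Xv 1) ^ 7 * (1 + Xv 1) ^ 4 * (1 + Xv 1 ^ 2) := by
  have h : toS (diagf (bin 0)) * DD = toS (diagf (bin 0)) * (1 - Xv 1 * Xv 0) * (1 - Xv 1) ^ (0 + 1) * ((1 - Xv 0) ^ 3 * (1 + Xv 0) * (1 - Xv 1) ^ 7 * (1 + Xv 1) ^ 4 * (1 + Xv 1 ^ 2)) := by
    rw [DD]; ring
  rw [h, diag_mul, SP_bin_v, SP_del_del, one_mul]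
lemma L37 : toS (diagf (bin 1)) * DD = (1 - Xv 0) ^ 3 * (1 + Xv 0) * (1 - Xv 1) ^ 6 * (1 + Xv 1) ^ 4 * (1 + Xv 1 ^ 2) := by
  have h : toS (diagf (bin 1)) * DD = toS (diagf (bin 1)) * (1 - Xv 1 * Xv 0) * (1 - Xv 1) ^ (1 + 1) * ((1 - Xv 0) ^ 3 * (1 + Xv 0) * (1 - Xv 1) ^ 6 * (1 + Xv 1) ^ 4 * (1 + Xv 1 ^ 2)) := by
    rw [DD]; ring
  rw [h, diag_mul, SP_bin_v, SP_del_del, one_mul]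
lemma L38 : toS (diagf (bin 2)) * DD = (1 - Xv 0) ^ 3 * (1 + Xv 0) * (1 - Xv 1) ^ 5 * (1 + Xv 1) ^ 4 * (1 + Xv 1 ^ 2) := by
  have h : toS (diagf (bin 2)) * DD = toS (diagf (bin 2)) * (1 - Xv 1 * Xv 0) * (1 - Xv 1) ^ (2 + 1) * ((1 - Xv 0) ^ 3 * (1 + Xv 0) * (1 - Xv 1) ^ 5 * (1 + Xv 1) ^ 4 * (1 + Xv 1 ^ 2)) := by
    rw [DD]; ring
  rw [h, diag_mul, SP_bin_v, SP_del_del, one_mul]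
lemma L39 : toS (diagf (bin 3)) * DD = (1 - Xv 0) ^ 3 * (1 + Xv 0) * (1 - Xv 1) ^ 4 * (1 + Xv 1) ^ 4 * (1 + Xv 1 ^ 2) := by
  have h : toS (diagf (bin 3)) * DD = toS (diagf (bin 3)) * (1 - Xv 1 * Xv 0) * (1 - Xv 1) ^ (3 + 1) * ((1 - Xv 0) ^ 3 * (1 + Xv 0) * (1 - Xv 1) ^ 4 * (1 + Xv 1) ^ 4 * (1 + Xv 1 ^ 2)) := by
    rw [DD]; ring
  rw [h, diag_mul, SP_bin_v, SP_del_del, one_mul]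
lemma L40 : toS (diagf (bin 5)) * DD = (1 - Xv 0) ^ 3 * (1 + Xv 0) * (1 - Xv 1) ^ 2 * (1 + Xv 1) ^ 4 * (1 + Xv 1 ^ 2) := by
  have h : toS (diagf (bin 5)) * DD = toS (diagf (bin 5)) * (1 - Xv 1 * Xv 0) * (1 - Xv 1) ^ (5 + 1) * ((1 - Xv 0) ^ 3 * (1 + Xv 0) * (1 - Xv 1) ^ 2 * (1 + Xv 1) ^ 4 * (1 + Xv 1 ^ 2)) := by
    rw [DD]; ring
  rw [h, diag_mul, SP_bin_v, SP_del_del, one_mul]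
lemma L41 : toS (diagf (bin 6)) * DD = (1 - Xv 0) ^ 3 * (1 + Xv 0) * (1 - Xv 1) ^ 1 * (1 + Xv 1) ^ 4 * (1 + Xv 1 ^ 2) := by
  have h : toS (diagf (bin 6)) * DD = toS (diagf (bin 6)) * (1 - Xv 1 * Xv 0) * (1 - Xv 1) ^ (6 + 1) * ((1 - Xv 0) ^ 3 * (1 + Xv 0) * (1 - Xv 1) ^ 1 * (1 + Xv 1) ^ 4 * (1 + Xv 1 ^ 2)) := by
    rw [DD]; ring
  rw [h, diag_mul, SP_bin_v, SP_del_del, one_mul]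
lemma L42 : toS (diagf (bin 7)) * DD = (1 - Xv 0) ^ 3 * (1 + Xv 0) * (1 + Xv 1) ^ 4 * (1 + Xv 1 ^ 2) := by
  have h : toS (diagf (bin 7)) * DD = toS (diagf (bin 7)) * (1 - Xv 1 * Xv 0) * (1 - Xv 1) ^ (7 + 1) * ((1 - Xv 0) ^ 3 * (1 + Xv 0) * (1 + Xv 1) ^ 4 * (1 + Xv 1 ^ 2)) := by
    rw [DD]; ring
  rw [h, diag_mul, SP_bin_v, SP_del_del, one_mul]
lemma L43 : toS (diagf (sbin 0)) * DD = (1 - Xv 0) ^ 3 * (1 + Xv 0) * (1 - Xv 1) ^ 8 * (1 + Xv 1) ^ 3 * (1 + Xv 1 ^ 2) := by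
  have h : toS (diagf (sbin 0)) * DD = toS (diagf (sbin 0)) * (1 - Xv 1 * Xv 0) * (1 + Xv 1) ^ (0 + 1) * ((1 - Xv 0) ^ 3 * (1 + Xv 0) * (1 - Xv 1) ^ 8 * (1 + Xv 1) ^ 3 * (1 + Xv 1 ^ 2)) := by
    rw [DD]; ring
  rw [h, diag_mul, SP_sbin_v, SP_del_del, one_mul]
lemma L44 : toS (diagf (sbin 1)) * DD = (1 - Xv 0) ^ 3 * (1 + Xv 0) * (1 - Xv 1) ^ 8 * (1 + Xv 1) ^ 2 * (1 + Xv 1 ^ 2) := by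
  have h : toS (diagf (sbin 1)) * DD = toS (diagf (sbin 1)) * (1 - Xv 1 * Xv 0) * (1 + Xv 1) ^ (1 + 1) * ((1 - Xv 0) ^ 3 * (1 + Xv 0) * (1 - Xv 1) ^ 8 * (1 + Xv 1) ^ 2 * (1 + Xv 1 ^ 2)) := by
    rw [DD]; ring
  rw [h, diag_mul, SP_sbin_v, SP_del_del, one_mul]
lemma L45 : toS (diagf (sbin 2)) * DD = (1 - Xv 0) ^ 3 * (1 + Xv 0) * (1 - Xv 1) ^ 8 * (1 + Xv 1) ^ 1 * (1 + Xv 1 ^ 2) := by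
  have h : toS (diagf (sbin 2)) * DD = toS (diagf (sbin 2)) * (1 - Xv 1 * Xv 0) * (1 + Xv 1) ^ (2 + 1) * ((1 - Xv 0) ^ 3 * (1 + Xv 0) * (1 - Xv 1) ^ 8 * (1 + Xv 1) ^ 1 * (1 + Xv 1 ^ 2)) := by
    rw [DD]; ring
  rw [h, diag_mul, SP_sbin_v, SP_del_del, one_mul]
lemma L46 : toS (diagf (sbin 3)) * DD = (1 - Xv 0) ^ 3 * (1 + Xv 0) * (1 - Xv 1) ^ 8 * (1 + Xv 1 ^ 2) := by
  have h : toS (diagf (sbin 3)) * DD = toS (diagf (sbin 3)) * (1 - Xv 1 * Xv 0) * (1 + Xv 1) ^ (3 + 1) * ((1 - Xv 0) ^ 3 * (1 + Xv 0) * (1 - Xv 1) ^ 8 * (1 + Xv 1 ^ 2)) := by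
    rw [DD]; ring
  rw [h, diag_mul, SP_sbin_v, SP_del_del, one_mul]
lemma L47 : toS (diagf i4p) * DD = (1 - Xv 0) ^ 3 * (1 + Xv 0) * (1 - Xv 1) ^ 8 * (1 + Xv 1) ^ 4 := by
  have h : toS (diagf i4p) * DD = toS (diagf i4p) * (1 - Xv 1 * Xv 0) * (1 + Xv 1 ^ 2) * ((1 - Xv 0) ^ 3 * (1 + Xv 0) * (1 - Xv 1) ^ 8 * (1 + Xv 1) ^ 4) := by
    rw [DD]; ring
  rw [h, diag_mul, SP_i4p_v, SP_del_del, one_mul]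

noncomputable def g1024 : ℕ → ℕ → ℚ := fun a b =>
  ((24) : ℚ) * (bin 2 a * bin 0 b) +
    ((40) : ℚ) * (bin 2 a * bin 1 b) +
    ((64) : ℚ) * (bin 2 a * bin 2 b) +
    ((96) : ℚ) * (bin 2 a * bin 3 b) +
    ((128) : ℚ) * (bin 2 a * bin 4 b) +
    ((128) : ℚ) * (bin 2 a * bin 5 b) +
    ((24) : ℚ) * (bin 2 a * sbin 0 b) +
    ((8) : ℚ) * (bin 2 a * sbin 1 b) +
    ((34) : ℚ) * (bin 1 a * bin 0 b) +
    ((42) : ℚ) * (bin 1 a * bin 1 b) +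
    ((44) : ℚ) * (bin 1 a * bin 2 b) +
    ((32) : ℚ) * (bin 1 a * bin 3 b) +
    ((-32) : ℚ) * (bin 1 a * bin 5 b) +
    ((64) : ℚ) * (bin 1 a * bin 6 b) +
    ((34) : ℚ) * (bin 1 a * sbin 0 b) +
    ((26) : ℚ) * (bin 1 a * sbin 1 b) +
    ((12) : ℚ) * (bin 1 a * sbin 2 b) +
    ((29) : ℚ) * (bin 0 a * bin 0 b) +
    ((25) : ℚ) * (bin 0 a * bin 1 b) +
    ((12) : ℚ) * (bin 0 a * bin 2 b) +
    ((-10) : ℚ) * (bin 0 a * bin 3 b) +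
    ((-32) : ℚ) * (bin 0 a * bin 4 b) +
    ((-32) : ℚ) * (bin 0 a * bin 5 b) +
    ((32) : ℚ) * (bin 0 a * bin 7 b) +
    ((29) : ℚ) * (bin 0 a * sbin 0 b) +
    ((33) : ℚ) * (bin 0 a * sbin 1 b) +
    ((28) : ℚ) * (bin 0 a * sbin 2 b) +
    ((14) : ℚ) * (bin 0 a * sbin 3 b) +
    ((12) : ℚ) * (sbin 0 a * bin 0 b) +
    ((4) : ℚ) * (sbin 0 a * bin 1 b) +
    ((28) : ℚ) * (sbin 0 a * sbin 0 b) +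
    ((36) : ℚ) * (sbin 0 a * sbin 1 b) +
    ((32) : ℚ) * (sbin 0 a * sbin 2 b) +
    ((16) : ℚ) * (sbin 0 a * sbin 3 b) +
    ((-16) : ℚ) * (sbin 0 a * i4q b) +
    ((4) : ℚ) * diagf (bin 0) a b +
    ((-9) : ℚ) * diagf (bin 1) a b +
    ((-22) : ℚ) * diagf (bin 2) a b +
    ((-22) : ℚ) * diagf (bin 3) a b +
    ((32) : ℚ) * diagf (bin 5) a b +
    ((32) : ℚ) * diagf (bin 6) a b +
    ((-32) : ℚ) * diagf (bin 7) a b +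
    ((4) : ℚ) * diagf (sbin 0) a b +
    ((1) : ℚ) * diagf (sbin 1) a b +
    ((-2) : ℚ) * diagf (sbin 2) a b +
    ((-2) : ℚ) * diagf (sbin 3) a b +
    ((16) : ℚ) * diagf i4p a b

lemma hsplit : toS g1024 =
    (((24) : ℤ) : Q2) * SP (bin 2) (bin 0) +
      (((40) : ℤ) : Q2) * SP (bin 2) (bin 1) +
      (((64) : ℤ) : Q2) * SP (bin 2) (bin 2) +
      (((96) : ℤ) : Q2) * SP (bin 2) (bin 3) +
      (((128) : ℤ) : Q2) * SP (bin 2) (bin 4) +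
      (((128) : ℤ) : Q2) * SP (bin 2) (bin 5) +
      (((24) : ℤ) : Q2) * SP (bin 2) (sbin 0) +
      (((8) : ℤ) : Q2) * SP (bin 2) (sbin 1) +
      (((34) : ℤ) : Q2) * SP (bin 1) (bin 0) +
      (((42) : ℤ) : Q2) * SP (bin 1) (bin 1) +
      (((44) : ℤ) : Q2) * SP (bin 1) (bin 2) +
      (((32) : ℤ) : Q2) * SP (bin 1) (bin 3) +
      (((-32) : ℤ) : Q2) * SP (bin 1) (bin 5) +
      (((64) : ℤ) : Q2) * SP (bin 1) (bin 6) +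
      (((34) : ℤ) : Q2) * SP (bin 1) (sbin 0) +
      (((26) : ℤ) : Q2) * SP (bin 1) (sbin 1) +
      (((12) : ℤ) : Q2) * SP (bin 1) (sbin 2) +
      (((29) : ℤ) : Q2) * SP (bin 0) (bin 0) +
      (((25) : ℤ) : Q2) * SP (bin 0) (bin 1) +
      (((12) : ℤ) : Q2) * SP (bin 0) (bin 2) +
      (((-10) : ℤ) : Q2) * SP (bin 0) (bin 3) +
      (((-32) : ℤ) : Q2) * SP (bin 0) (bin 4) +
      (((-32) : ℤ) : Q2) * SP (bin 0) (bin 5) +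
      (((32) : ℤ) : Q2) * SP (bin 0) (bin 7) +
      (((29) : ℤ) : Q2) * SP (bin 0) (sbin 0) +
      (((33) : ℤ) : Q2) * SP (bin 0) (sbin 1) +
      (((28) : ℤ) : Q2) * SP (bin 0) (sbin 2) +
      (((14) : ℤ) : Q2) * SP (bin 0) (sbin 3) +
      (((12) : ℤ) : Q2) * SP (sbin 0) (bin 0) +
      (((4) : ℤ) : Q2) * SP (sbin 0) (bin 1) +
      (((28) : ℤ) : Q2) * SP (sbin 0) (sbin 0) +
      (((36) : ℤ) : Q2) * SP (sbin 0) (sbin 1) +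
      (((32) : ℤ) : Q2) * SP (sbin 0) (sbin 2) +
      (((16) : ℤ) : Q2) * SP (sbin 0) (sbin 3) +
      (((-16) : ℤ) : Q2) * SP (sbin 0) i4q +
      (((4) : ℤ) : Q2) * toS (diagf (bin 0)) +
      (((-9) : ℤ) : Q2) * toS (diagf (bin 1)) +
      (((-22) : ℤ) : Q2) * toS (diagf (bin 2)) +
      (((-22) : ℤ) : Q2) * toS (diagf (bin 3)) +
      (((32) : ℤ) : Q2) * toS (diagf (bin 5)) +
      (((32) : ℤ) : Q2) * toS (diagf (bin 6)) +
      (((-32) : ℤ) : Q2) * toS (diagf (bin 7)) +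
      (((4) : ℤ) : Q2) * toS (diagf (sbin 0)) +
      (((1) : ℤ) : Q2) * toS (diagf (sbin 1)) +
      (((-2) : ℤ) : Q2) * toS (diagf (sbin 2)) +
      (((-2) : ℤ) : Q2) * toS (diagf (sbin 3)) +
      (((16) : ℤ) : Q2) * toS (diagf i4p) := by
  apply Q2ext
  intro a b
  simp only [c_add, c_int_mul, SP, c_toS, g1024, sepf]
  push_cast
  ring

lemma hG : toS g1024 * DD = ((1024 : ℤ) : Q2) * (NW * (1 - Xv 1)) := by
  rw [hsplit]
  simp only [add_mul, mul_assoc]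
  rw [L1, L2, L3, L4, L5, L6, L7, L8, L9, L10, L11, L12, L13, L14, L15, L16, L17, L18, L19, L20, L21, L22, L23, L24, L25, L26, L27, L28, L29, L30, L31, L32, L33, L34, L35, L36, L37, L38, L39, L40, L41, L42, L43, L44, L45, L46, L47]
  rw [NW]
  push_cast
  ring


lemma hDWc : MvPowerSeries.constantCoeff (σ := Fin 2) (R := ℚ) DW = 1 := by
  rw [DW]; simp [Xv]

lemma hDDc : MvPowerSeries.constantCoeff (σ := Fin 2) (R := ℚ) DD = 1 := by
  rw [DD]; simp [Xv]

lemma W_eq : Wseries = NW * DW⁻¹ := rfl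

lemma hWmul : Wseries * DD = NW * (1 - Xv 1) := by
  rw [W_eq]
  have h := MvPowerSeries.inv_mul_cancel DW (by rw [hDWc]; norm_num)
  calc NW * DW⁻¹ * DD = NW * (1 - Xv 1) * (DW⁻¹ * DW) := by rw [DD, DW]; ring
    _ = NW * (1 - Xv 1) := by rw [h, mul_one]

lemma hWG : toS g1024 = ((1024 : ℤ) : Q2) * Wseries := by
  have h2 := MvPowerSeries.mul_inv_cancel DD (by rw [hDDc]; norm_num)
  calc toS g1024 = toS g1024 * DD * DD⁻¹ := by rw [mul_assoc, h2, mul_one]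
    _ = ((1024 : ℤ) : Q2) * (NW * (1 - Xv 1)) * DD⁻¹ := by rw [hG]
    _ = ((1024 : ℤ) : Q2) * (Wseries * DD) * DD⁻¹ := by rw [hWmul]
    _ = ((1024 : ℤ) : Q2) * Wseries * (DD * DD⁻¹) := by ring
    _ = ((1024 : ℤ) : Q2) * Wseries := by rw [h2, mul_one]

lemma c_W (a b : ℕ) : 1024 * c a b Wseries = g1024 a b := by
  have h := congrArg (c a b) hWG
  rw [c_toS, c_int_mul] at h
  push_cast at h
  linarith [h]

lemma bin0_eval (n : ℕ) : bin 0 n = 1 := by simp [bin]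

lemma bin_succ_eval (m n : ℕ) :
    bin (m+1) n = bin m n * ((n : ℚ) + (m : ℚ) + 1) / ((m : ℚ) + 1) := by
  have h := Nat.add_one_mul_choose_eq (n + m) m
  have hq : ((n : ℚ) + (m : ℚ) + 1) * bin m n = bin (m+1) n * ((m : ℚ) + 1) := by
    unfold bin
    have e : n + (m+1) = (n + m) + 1 := by omega
    rw [e]
    have hc : ((Nat.succ (n+m) * Nat.choose (n+m) m : ℕ) : ℚ)
        = ((Nat.choose (Nat.succ (n+m)) (Nat.succ m) * Nat.succ m : ℕ) : ℚ) := by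
      exact congrArg (Nat.cast : ℕ → ℚ) h
    push_cast at hc
    push_cast
    linarith [hc]
  have hm1 : ((m : ℚ) + 1) ≠ 0 := by positivity
  field_simp
  linarith [hq]

lemma bin1_eval (n : ℕ) : bin 1 n = (n : ℚ) + 1 := by
  rw [show (1:ℕ) = 0 + 1 by norm_num, bin_succ_eval, bin0_eval]; push_cast; ring
lemma bin2_eval (n : ℕ) : bin 2 n = ((n:ℚ)+1) * ((n:ℚ)+2) / 2 := by
  rw [show (2:ℕ) = 1 + 1 by norm_num, bin_succ_eval, bin1_eval]; push_cast; ring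
lemma bin3_eval (n : ℕ) : bin 3 n = ((n:ℚ)+1) * ((n:ℚ)+2) * ((n:ℚ)+3) / 6 := by
  rw [show (3:ℕ) = 2 + 1 by norm_num, bin_succ_eval, bin2_eval]; push_cast; ring
lemma bin4_eval (n : ℕ) : bin 4 n = ((n:ℚ)+1) * ((n:ℚ)+2) * ((n:ℚ)+3) * ((n:ℚ)+4) / 24 := by
  rw [show (4:ℕ) = 3 + 1 by norm_num, bin_succ_eval, bin3_eval]; push_cast; ring
lemma bin5_eval (n : ℕ) : bin 5 n = ((n:ℚ)+1) * ((n:ℚ)+2) * ((n:ℚ)+3) * ((n:ℚ)+4) * ((n:ℚ)+5) / 120 := by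
  rw [show (5:ℕ) = 4 + 1 by norm_num, bin_succ_eval, bin4_eval]; push_cast; ring
lemma bin6_eval (n : ℕ) : bin 6 n = ((n:ℚ)+1) * ((n:ℚ)+2) * ((n:ℚ)+3) * ((n:ℚ)+4) * ((n:ℚ)+5) * ((n:ℚ)+6) / 720 := by
  rw [show (6:ℕ) = 5 + 1 by norm_num, bin_succ_eval, bin5_eval]; push_cast; ring
lemma bin7_eval (n : ℕ) : bin 7 n = ((n:ℚ)+1) * ((n:ℚ)+2) * ((n:ℚ)+3) * ((n:ℚ)+4) * ((n:ℚ)+5) * ((n:ℚ)+6) * ((n:ℚ)+7) / 5040 := by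
  rw [show (7:ℕ) = 6 + 1 by norm_num, bin_succ_eval, bin6_eval]; push_cast; ring


set_option maxHeartbeats 2000000 in
/-- Corollary 5, first asymptotic: for λ1 > 2λ2 ≥ 0,
m_{(λ1,λ2)}(T) = λ2⁷/(7!·2⁵) + (λ1−λ2)λ2⁶/(6!·2⁴) + (λ1−λ2)²λ2⁵/(5!·2⁴)
+ O((λ1+λ2)⁶), where m_{(λ1,λ2)}(T) is the coefficient of t^{λ1−λ2}v^{λ2} in W. -/
theorem asymptotics_case_l1_gt_2l2 :
    ∃ C : ℚ, 0 < C ∧ ∀ l1 l2 : ℕ, 2 * l2 < l1 →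
      |c (l1 - l2) l2 Wseries
        - ((l2 : ℚ) ^ 7 / ((Nat.factorial 7 : ℚ) * 2 ^ 5)
            + ((l1 : ℚ) - (l2 : ℚ)) * (l2 : ℚ) ^ 6 / ((Nat.factorial 6 : ℚ) * 2 ^ 4)
            + ((l1 : ℚ) - (l2 : ℚ)) ^ 2 * (l2 : ℚ) ^ 5 / ((Nat.factorial 5 : ℚ) * 2 ^ 4))|
      ≤ C * ((l1 : ℚ) + (l2 : ℚ) + 1) ^ 6 := by
  refine ⟨100, by norm_num, ?_⟩
  intro l1 l2 h2l
  have hl : l2 ≤ l1 := by omega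
  have h1024 := c_W (l1 - l2) l2
  have hnab : ¬ (l1 - l2 ≤ l2) := by omega
  simp only [g1024, diagf, hnab, if_false, mul_zero, add_zero] at h1024
  simp only [sbin, bin0_eval, bin1_eval, bin2_eval, bin3_eval, bin4_eval, bin5_eval,
    bin6_eval, bin7_eval] at h1024
  have hxa : ((l1 - l2 : ℕ) : ℚ) = (l1 : ℚ) - (l2 : ℚ) := by
    rw [Nat.cast_sub hl]
  rw [hxa] at h1024
  have hf7 : (Nat.factorial 7 : ℚ) = 5040 := by norm_num [Nat.factorial]
  have hf6 : (Nat.factorial 6 : ℚ) = 720 := by norm_num [Nat.factorial]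
  have hf5 : (Nat.factorial 5 : ℚ) = 120 := by norm_num [Nat.factorial]
  rw [hf7, hf6, hf5]
  have hx0 : (0:ℚ) ≤ ((l1:ℚ) - (l2:ℚ)) := by
    have : (l2:ℚ) ≤ (l1:ℚ) := by exact_mod_cast hl
    linarith
  have hy0 : (0:ℚ) ≤ ((l2:ℚ)) := by positivity
  have hxz : ((l1:ℚ) - (l2:ℚ)) ≤ ((l1:ℚ) + (l2:ℚ) + 1) := by
    have : (0:ℚ) ≤ (l2:ℚ) := by positivity
    linarith
  have hyz : ((l2:ℚ)) ≤ ((l1:ℚ) + (l2:ℚ) + 1) := by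
    have : (0:ℚ) ≤ (l1:ℚ) := by positivity
    linarith
  have hz1 : (1:ℚ) ≤ ((l1:ℚ) + (l2:ℚ) + 1) := by
    have : (0:ℚ) ≤ (l1:ℚ) := by positivity
    have : (0:ℚ) ≤ (l2:ℚ) := by positivity
    linarith
  have hm00 : ((l1:ℚ) - (l2:ℚ))^0 * ((l2:ℚ))^0 ≤ ((l1:ℚ) + (l2:ℚ) + 1)^6 := by
    calc ((l1:ℚ) - (l2:ℚ))^0 * ((l2:ℚ))^0 ≤ ((l1:ℚ) + (l2:ℚ) + 1)^0 * ((l1:ℚ) + (l2:ℚ) + 1)^0 :=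
          mul_le_mul (pow_le_pow_left₀ hx0 hxz _) (pow_le_pow_left₀ hy0 hyz _) (by positivity) (by positivity)
      _ = ((l1:ℚ) + (l2:ℚ) + 1)^(0+0) := by rw [← pow_add]
      _ ≤ ((l1:ℚ) + (l2:ℚ) + 1)^6 := pow_le_pow_right₀ hz1 (by norm_num)
  have hp00 : (0:ℚ) ≤ ((l1:ℚ) - (l2:ℚ))^0 * ((l2:ℚ))^0 := by positivity
  have hm01 : ((l1:ℚ) - (l2:ℚ))^0 * ((l2:ℚ))^1 ≤ ((l1:ℚ) + (l2:ℚ) + 1)^6 := by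
    calc ((l1:ℚ) - (l2:ℚ))^0 * ((l2:ℚ))^1 ≤ ((l1:ℚ) + (l2:ℚ) + 1)^0 * ((l1:ℚ) + (l2:ℚ) + 1)^1 :=
          mul_le_mul (pow_le_pow_left₀ hx0 hxz _) (pow_le_pow_left₀ hy0 hyz _) (by positivity) (by positivity)
      _ = ((l1:ℚ) + (l2:ℚ) + 1)^(0+1) := by rw [← pow_add]
      _ ≤ ((l1:ℚ) + (l2:ℚ) + 1)^6 := pow_le_pow_right₀ hz1 (by norm_num)
  have hp01 : (0:ℚ) ≤ ((l1:ℚ) - (l2:ℚ))^0 * ((l2:ℚ))^1 := by positivity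
  have hm02 : ((l1:ℚ) - (l2:ℚ))^0 * ((l2:ℚ))^2 ≤ ((l1:ℚ) + (l2:ℚ) + 1)^6 := by
    calc ((l1:ℚ) - (l2:ℚ))^0 * ((l2:ℚ))^2 ≤ ((l1:ℚ) + (l2:ℚ) + 1)^0 * ((l1:ℚ) + (l2:ℚ) + 1)^2 :=
          mul_le_mul (pow_le_pow_left₀ hx0 hxz _) (pow_le_pow_left₀ hy0 hyz _) (by positivity) (by positivity)
      _ = ((l1:ℚ) + (l2:ℚ) + 1)^(0+2) := by rw [← pow_add]
      _ ≤ ((l1:ℚ) + (l2:ℚ) + 1)^6 := pow_le_pow_right₀ hz1 (by norm_num)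
  have hp02 : (0:ℚ) ≤ ((l1:ℚ) - (l2:ℚ))^0 * ((l2:ℚ))^2 := by positivity
  have hm03 : ((l1:ℚ) - (l2:ℚ))^0 * ((l2:ℚ))^3 ≤ ((l1:ℚ) + (l2:ℚ) + 1)^6 := by
    calc ((l1:ℚ) - (l2:ℚ))^0 * ((l2:ℚ))^3 ≤ ((l1:ℚ) + (l2:ℚ) + 1)^0 * ((l1:ℚ) + (l2:ℚ) + 1)^3 :=
          mul_le_mul (pow_le_pow_left₀ hx0 hxz _) (pow_le_pow_left₀ hy0 hyz _) (by positivity) (by positivity)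
      _ = ((l1:ℚ) + (l2:ℚ) + 1)^(0+3) := by rw [← pow_add]
      _ ≤ ((l1:ℚ) + (l2:ℚ) + 1)^6 := pow_le_pow_right₀ hz1 (by norm_num)
  have hp03 : (0:ℚ) ≤ ((l1:ℚ) - (l2:ℚ))^0 * ((l2:ℚ))^3 := by positivity
  have hm04 : ((l1:ℚ) - (l2:ℚ))^0 * ((l2:ℚ))^4 ≤ ((l1:ℚ) + (l2:ℚ) + 1)^6 := by
    calc ((l1:ℚ) - (l2:ℚ))^0 * ((l2:ℚ))^4 ≤ ((l1:ℚ) + (l2:ℚ) + 1)^0 * ((l1:ℚ) + (l2:ℚ) + 1)^4 :=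
          mul_le_mul (pow_le_pow_left₀ hx0 hxz _) (pow_le_pow_left₀ hy0 hyz _) (by positivity) (by positivity)
      _ = ((l1:ℚ) + (l2:ℚ) + 1)^(0+4) := by rw [← pow_add]
      _ ≤ ((l1:ℚ) + (l2:ℚ) + 1)^6 := pow_le_pow_right₀ hz1 (by norm_num)
  have hp04 : (0:ℚ) ≤ ((l1:ℚ) - (l2:ℚ))^0 * ((l2:ℚ))^4 := by positivity
  have hm05 : ((l1:ℚ) - (l2:ℚ))^0 * ((l2:ℚ))^5 ≤ ((l1:ℚ) + (l2:ℚ) + 1)^6 := by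
    calc ((l1:ℚ) - (l2:ℚ))^0 * ((l2:ℚ))^5 ≤ ((l1:ℚ) + (l2:ℚ) + 1)^0 * ((l1:ℚ) + (l2:ℚ) + 1)^5 :=
          mul_le_mul (pow_le_pow_left₀ hx0 hxz _) (pow_le_pow_left₀ hy0 hyz _) (by positivity) (by positivity)
      _ = ((l1:ℚ) + (l2:ℚ) + 1)^(0+5) := by rw [← pow_add]
      _ ≤ ((l1:ℚ) + (l2:ℚ) + 1)^6 := pow_le_pow_right₀ hz1 (by norm_num)
  have hp05 : (0:ℚ) ≤ ((l1:ℚ) - (l2:ℚ))^0 * ((l2:ℚ))^5 := by positivity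
  have hm06 : ((l1:ℚ) - (l2:ℚ))^0 * ((l2:ℚ))^6 ≤ ((l1:ℚ) + (l2:ℚ) + 1)^6 := by
    calc ((l1:ℚ) - (l2:ℚ))^0 * ((l2:ℚ))^6 ≤ ((l1:ℚ) + (l2:ℚ) + 1)^0 * ((l1:ℚ) + (l2:ℚ) + 1)^6 :=
          mul_le_mul (pow_le_pow_left₀ hx0 hxz _) (pow_le_pow_left₀ hy0 hyz _) (by positivity) (by positivity)
      _ = ((l1:ℚ) + (l2:ℚ) + 1)^(0+6) := by rw [← pow_add]
      _ ≤ ((l1:ℚ) + (l2:ℚ) + 1)^6 := pow_le_pow_right₀ hz1 (by norm_num)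
  have hp06 : (0:ℚ) ≤ ((l1:ℚ) - (l2:ℚ))^0 * ((l2:ℚ))^6 := by positivity
  have hm10 : ((l1:ℚ) - (l2:ℚ))^1 * ((l2:ℚ))^0 ≤ ((l1:ℚ) + (l2:ℚ) + 1)^6 := by
    calc ((l1:ℚ) - (l2:ℚ))^1 * ((l2:ℚ))^0 ≤ ((l1:ℚ) + (l2:ℚ) + 1)^1 * ((l1:ℚ) + (l2:ℚ) + 1)^0 :=
          mul_le_mul (pow_le_pow_left₀ hx0 hxz _) (pow_le_pow_left₀ hy0 hyz _) (by positivity) (by positivity)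
      _ = ((l1:ℚ) + (l2:ℚ) + 1)^(1+0) := by rw [← pow_add]
      _ ≤ ((l1:ℚ) + (l2:ℚ) + 1)^6 := pow_le_pow_right₀ hz1 (by norm_num)
  have hp10 : (0:ℚ) ≤ ((l1:ℚ) - (l2:ℚ))^1 * ((l2:ℚ))^0 := by positivity
  have hm11 : ((l1:ℚ) - (l2:ℚ))^1 * ((l2:ℚ))^1 ≤ ((l1:ℚ) + (l2:ℚ) + 1)^6 := by
    calc ((l1:ℚ) - (l2:ℚ))^1 * ((l2:ℚ))^1 ≤ ((l1:ℚ) + (l2:ℚ) + 1)^1 * ((l1:ℚ) + (l2:ℚ) + 1)^1 :=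
          mul_le_mul (pow_le_pow_left₀ hx0 hxz _) (pow_le_pow_left₀ hy0 hyz _) (by positivity) (by positivity)
      _ = ((l1:ℚ) + (l2:ℚ) + 1)^(1+1) := by rw [← pow_add]
      _ ≤ ((l1:ℚ) + (l2:ℚ) + 1)^6 := pow_le_pow_right₀ hz1 (by norm_num)
  have hp11 : (0:ℚ) ≤ ((l1:ℚ) - (l2:ℚ))^1 * ((l2:ℚ))^1 := by positivity
  have hm12 : ((l1:ℚ) - (l2:ℚ))^1 * ((l2:ℚ))^2 ≤ ((l1:ℚ) + (l2:ℚ) + 1)^6 := by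
    calc ((l1:ℚ) - (l2:ℚ))^1 * ((l2:ℚ))^2 ≤ ((l1:ℚ) + (l2:ℚ) + 1)^1 * ((l1:ℚ) + (l2:ℚ) + 1)^2 :=
          mul_le_mul (pow_le_pow_left₀ hx0 hxz _) (pow_le_pow_left₀ hy0 hyz _) (by positivity) (by positivity)
      _ = ((l1:ℚ) + (l2:ℚ) + 1)^(1+2) := by rw [← pow_add]
      _ ≤ ((l1:ℚ) + (l2:ℚ) + 1)^6 := pow_le_pow_right₀ hz1 (by norm_num)
  have hp12 : (0:ℚ) ≤ ((l1:ℚ) - (l2:ℚ))^1 * ((l2:ℚ))^2 := by positivity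
  have hm13 : ((l1:ℚ) - (l2:ℚ))^1 * ((l2:ℚ))^3 ≤ ((l1:ℚ) + (l2:ℚ) + 1)^6 := by
    calc ((l1:ℚ) - (l2:ℚ))^1 * ((l2:ℚ))^3 ≤ ((l1:ℚ) + (l2:ℚ) + 1)^1 * ((l1:ℚ) + (l2:ℚ) + 1)^3 :=
          mul_le_mul (pow_le_pow_left₀ hx0 hxz _) (pow_le_pow_left₀ hy0 hyz _) (by positivity) (by positivity)
      _ = ((l1:ℚ) + (l2:ℚ) + 1)^(1+3) := by rw [← pow_add]
      _ ≤ ((l1:ℚ) + (l2:ℚ) + 1)^6 := pow_le_pow_right₀ hz1 (by norm_num)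
  have hp13 : (0:ℚ) ≤ ((l1:ℚ) - (l2:ℚ))^1 * ((l2:ℚ))^3 := by positivity
  have hm14 : ((l1:ℚ) - (l2:ℚ))^1 * ((l2:ℚ))^4 ≤ ((l1:ℚ) + (l2:ℚ) + 1)^6 := by
    calc ((l1:ℚ) - (l2:ℚ))^1 * ((l2:ℚ))^4 ≤ ((l1:ℚ) + (l2:ℚ) + 1)^1 * ((l1:ℚ) + (l2:ℚ) + 1)^4 :=
          mul_le_mul (pow_le_pow_left₀ hx0 hxz _) (pow_le_pow_left₀ hy0 hyz _) (by positivity) (by positivity)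
      _ = ((l1:ℚ) + (l2:ℚ) + 1)^(1+4) := by rw [← pow_add]
      _ ≤ ((l1:ℚ) + (l2:ℚ) + 1)^6 := pow_le_pow_right₀ hz1 (by norm_num)
  have hp14 : (0:ℚ) ≤ ((l1:ℚ) - (l2:ℚ))^1 * ((l2:ℚ))^4 := by positivity
  have hm15 : ((l1:ℚ) - (l2:ℚ))^1 * ((l2:ℚ))^5 ≤ ((l1:ℚ) + (l2:ℚ) + 1)^6 := by
    calc ((l1:ℚ) - (l2:ℚ))^1 * ((l2:ℚ))^5 ≤ ((l1:ℚ) + (l2:ℚ) + 1)^1 * ((l1:ℚ) + (l2:ℚ) + 1)^5 :=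
          mul_le_mul (pow_le_pow_left₀ hx0 hxz _) (pow_le_pow_left₀ hy0 hyz _) (by positivity) (by positivity)
      _ = ((l1:ℚ) + (l2:ℚ) + 1)^(1+5) := by rw [← pow_add]
      _ ≤ ((l1:ℚ) + (l2:ℚ) + 1)^6 := pow_le_pow_right₀ hz1 (by norm_num)
  have hp15 : (0:ℚ) ≤ ((l1:ℚ) - (l2:ℚ))^1 * ((l2:ℚ))^5 := by positivity
  have hm20 : ((l1:ℚ) - (l2:ℚ))^2 * ((l2:ℚ))^0 ≤ ((l1:ℚ) + (l2:ℚ) + 1)^6 := by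
    calc ((l1:ℚ) - (l2:ℚ))^2 * ((l2:ℚ))^0 ≤ ((l1:ℚ) + (l2:ℚ) + 1)^2 * ((l1:ℚ) + (l2:ℚ) + 1)^0 :=
          mul_le_mul (pow_le_pow_left₀ hx0 hxz _) (pow_le_pow_left₀ hy0 hyz _) (by positivity) (by positivity)
      _ = ((l1:ℚ) + (l2:ℚ) + 1)^(2+0) := by rw [← pow_add]
      _ ≤ ((l1:ℚ) + (l2:ℚ) + 1)^6 := pow_le_pow_right₀ hz1 (by norm_num)
  have hp20 : (0:ℚ) ≤ ((l1:ℚ) - (l2:ℚ))^2 * ((l2:ℚ))^0 := by positivity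
  have hm21 : ((l1:ℚ) - (l2:ℚ))^2 * ((l2:ℚ))^1 ≤ ((l1:ℚ) + (l2:ℚ) + 1)^6 := by
    calc ((l1:ℚ) - (l2:ℚ))^2 * ((l2:ℚ))^1 ≤ ((l1:ℚ) + (l2:ℚ) + 1)^2 * ((l1:ℚ) + (l2:ℚ) + 1)^1 :=
          mul_le_mul (pow_le_pow_left₀ hx0 hxz _) (pow_le_pow_left₀ hy0 hyz _) (by positivity) (by positivity)
      _ = ((l1:ℚ) + (l2:ℚ) + 1)^(2+1) := by rw [← pow_add]
      _ ≤ ((l1:ℚ) + (l2:ℚ) + 1)^6 := pow_le_pow_right₀ hz1 (by norm_num)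
  have hp21 : (0:ℚ) ≤ ((l1:ℚ) - (l2:ℚ))^2 * ((l2:ℚ))^1 := by positivity
  have hm22 : ((l1:ℚ) - (l2:ℚ))^2 * ((l2:ℚ))^2 ≤ ((l1:ℚ) + (l2:ℚ) + 1)^6 := by
    calc ((l1:ℚ) - (l2:ℚ))^2 * ((l2:ℚ))^2 ≤ ((l1:ℚ) + (l2:ℚ) + 1)^2 * ((l1:ℚ) + (l2:ℚ) + 1)^2 :=
          mul_le_mul (pow_le_pow_left₀ hx0 hxz _) (pow_le_pow_left₀ hy0 hyz _) (by positivity) (by positivity)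
      _ = ((l1:ℚ) + (l2:ℚ) + 1)^(2+2) := by rw [← pow_add]
      _ ≤ ((l1:ℚ) + (l2:ℚ) + 1)^6 := pow_le_pow_right₀ hz1 (by norm_num)
  have hp22 : (0:ℚ) ≤ ((l1:ℚ) - (l2:ℚ))^2 * ((l2:ℚ))^2 := by positivity
  have hm23 : ((l1:ℚ) - (l2:ℚ))^2 * ((l2:ℚ))^3 ≤ ((l1:ℚ) + (l2:ℚ) + 1)^6 := by
    calc ((l1:ℚ) - (l2:ℚ))^2 * ((l2:ℚ))^3 ≤ ((l1:ℚ) + (l2:ℚ) + 1)^2 * ((l1:ℚ) + (l2:ℚ) + 1)^3 :=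
          mul_le_mul (pow_le_pow_left₀ hx0 hxz _) (pow_le_pow_left₀ hy0 hyz _) (by positivity) (by positivity)
      _ = ((l1:ℚ) + (l2:ℚ) + 1)^(2+3) := by rw [← pow_add]
      _ ≤ ((l1:ℚ) + (l2:ℚ) + 1)^6 := pow_le_pow_right₀ hz1 (by norm_num)
  have hp23 : (0:ℚ) ≤ ((l1:ℚ) - (l2:ℚ))^2 * ((l2:ℚ))^3 := by positivity
  have hm24 : ((l1:ℚ) - (l2:ℚ))^2 * ((l2:ℚ))^4 ≤ ((l1:ℚ) + (l2:ℚ) + 1)^6 := by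
    calc ((l1:ℚ) - (l2:ℚ))^2 * ((l2:ℚ))^4 ≤ ((l1:ℚ) + (l2:ℚ) + 1)^2 * ((l1:ℚ) + (l2:ℚ) + 1)^4 :=
          mul_le_mul (pow_le_pow_left₀ hx0 hxz _) (pow_le_pow_left₀ hy0 hyz _) (by positivity) (by positivity)
      _ = ((l1:ℚ) + (l2:ℚ) + 1)^(2+4) := by rw [← pow_add]
      _ ≤ ((l1:ℚ) + (l2:ℚ) + 1)^6 := pow_le_pow_right₀ hz1 (by norm_num)
  have hp24 : (0:ℚ) ≤ ((l1:ℚ) - (l2:ℚ))^2 * ((l2:ℚ))^4 := by positivity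
  have hq1 : -1 ≤ i4q l2 := by
    simp only [i4q]; split_ifs <;> norm_num
  have hq2 : i4q l2 ≤ 1 := by
    simp only [i4q]; split_ifs <;> norm_num
  have hu : (-1:ℚ)^(l1-l2) = 1 ∨ (-1:ℚ)^(l1-l2) = -1 := by
    rcases Nat.even_or_odd (l1-l2) with h | h
    · exact Or.inl h.neg_one_pow
    · exact Or.inr h.neg_one_pow
  have hw : (-1:ℚ)^l2 = 1 ∨ (-1:ℚ)^l2 = -1 := by
    rcases Nat.even_or_odd l2 with h | h
    · exact Or.inl h.neg_one_pow
    · exact Or.inr h.neg_one_pow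
  rw [abs_le]
  rcases hu with hu | hu <;> rcases hw with hw | hw <;> rw [hu, hw] at h1024 <;>
    constructor <;>
    linarith [h1024, hm00, hp00, hm01, hp01, hm02, hp02, hm03, hp03, hm04, hp04, hm05, hp05, hm06, hp06, hm10, hp10, hm11, hp11, hm12, hp12, hm13, hp13, hm14, hp14, hm15, hp15, hm20, hp20, hm21, hp21, hm22, hp22, hm23, hp23, hm24, hp24, hq1, hq2]
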